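/- Let A be a complex n×n matrix all of whose eigenvalues have negative real part, and let r_c(A) = inf_{ω∈ℝ} σ_min(iωI − A), where σ_min denotes the smallest singular value. If B is a complex n×n matrix with ‖B‖ < r_c(A), then all eigenvalues of A + B have negative real part. -/

import Mathlib

set_option maxHeartbeats 1000000


open Matrix

/-- The operator 2-norm of a complex `n × n` matrix. -/
noncomputable def opNormC {n : ℕ} (A : Matrix (Fin n) (Fin n) ℂ) : ℝ :=
  ‖Matrix.toEuclideanCLM (𝕜 := ℂ) A‖

/-- The smallest singular value of a complex `n × n` matrix:
the infimum of `‖A x‖` over unit vectors `x`. -/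
noncomputable def sMin {n : ℕ} (A : Matrix (Fin n) (Fin n) ℂ) : ℝ :=
  ⨅ x : {x : EuclideanSpace ℂ (Fin n) // ‖x‖ = 1},
    ‖Matrix.toEuclideanCLM (𝕜 := ℂ) A (x : EuclideanSpace ℂ (Fin n))‖

/-- The complex stability radius `r_c(A) = inf_{ω ∈ ℝ} σ_min(iω I − A)`. -/
noncomputable def stabRadius {n : ℕ} (A : Matrix (Fin n) (Fin n) ℂ) : ℝ :=
  ⨅ ω : ℝ, sMin ((Complex.I * (ω : ℂ)) • (1 : Matrix (Fin n) (Fin n) ℂ) - A)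

lemma sMin_nonneg {n : ℕ} (A : Matrix (Fin n) (Fin n) ℂ) : 0 ≤ sMin A :=
  Real.iInf_nonneg fun _ => norm_nonneg _

lemma sMin_le_norm_apply {n : ℕ} (A : Matrix (Fin n) (Fin n) ℂ)
    {x : EuclideanSpace ℂ (Fin n)} (hx : ‖x‖ = 1) :
    sMin A ≤ ‖Matrix.toEuclideanCLM (𝕜 := ℂ) A x‖ :=
  ciInf_le ⟨0, fun _ ⟨y, hy⟩ => hy ▸ norm_nonneg _⟩ (⟨x, hx⟩ : {x : EuclideanSpace ℂ (Fin n) // ‖x‖ = 1})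

lemma stabRadius_le {n : ℕ} (A : Matrix (Fin n) (Fin n) ℂ) (ω : ℝ) :
    stabRadius A ≤ sMin ((Complex.I * (ω : ℂ)) • (1 : Matrix (Fin n) (Fin n) ℂ) - A) :=
  ciInf_le ⟨0, fun _ ⟨w, hw⟩ => hw ▸ sMin_nonneg _⟩ ω

/-- If all eigenvalues of `A` have negative real part and `‖B‖ < r_c(A)`, then all
eigenvalues of `A + B` have negative real part. -/
theorem eigenvalues_neg_re_of_opNorm_lt_stabRadius {n : ℕ}
    (A B : Matrix (Fin n) (Fin n) ℂ)
    (hA : ∀ μ ∈ spectrum ℂ A, μ.re < 0)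
    (hB : opNormC B < stabRadius A) :
    ∀ μ ∈ spectrum ℂ (A + B), μ.re < 0 := by
  intro μ hμ
  by_contra hre
  push_neg at hre
  set φ := Matrix.toEuclideanCLM (𝕜 := ℂ) (n := Fin n) with hφ
  set a := φ A with ha
  set b := φ B with hb
  set r := stabRadius A with hrdef
  have hbr : ‖b‖ < r := hB
  have hr0 : 0 < r := lt_of_le_of_lt (norm_nonneg b) hbr
  -- every point of the closed right half plane is in the resolvent set of `a`
  have hres : ∀ z : ℂ, 0 ≤ z.re → z ∈ resolventSet ℂ a := by
    intro z hz
    rw [resolventSet, Set.mem_setOf_eq]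
    have hzA : IsUnit (algebraMap ℂ (Matrix (Fin n) (Fin n) ℂ) z - A) := by
      by_contra h
      exact absurd (hA z (spectrum.mem_iff.2 h)) (not_lt.2 hz)
    have h := hzA.map φ.toRingEquiv.toMonoidHom
    have hφeq : φ.toRingEquiv.toMonoidHom (algebraMap ℂ (Matrix (Fin n) (Fin n) ℂ) z - A)
        = algebraMap ℂ _ z - a := by
      show φ (algebraMap ℂ (Matrix (Fin n) (Fin n) ℂ) z - A) = _
      rw [map_sub, AlgHomClass.commutes]
    rwa [hφeq] at h
  -- the resolvent on the imaginary axis is bounded by `1 / r`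
  have haxis : ∀ ω : ℝ, ‖resolvent a (Complex.I * (ω : ℂ))‖ ≤ 1 / r := by
    intro ω
    set z : ℂ := Complex.I * (ω : ℂ) with hzdef
    have hzres : z ∈ resolventSet ℂ a := by
      apply hres; simp [hzdef]
    have hzu : IsUnit (algebraMap ℂ _ z - a) := hzres
    apply ContinuousLinearMap.opNorm_le_bound _ (by positivity)
    intro y
    set x := resolvent a z y with hxdef
    have hcx : (algebraMap ℂ _ z - a) x = y := by
      have h1 : (algebraMap ℂ _ z - a) * resolvent a z = 1 := by
        rw [resolvent]; exact Ring.mul_inverse_cancel _ hzu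
      calc (algebraMap ℂ _ z - a) x = ((algebraMap ℂ _ z - a) * resolvent a z) y := rfl
        _ = y := by rw [h1]; rfl
    rcases eq_or_ne x 0 with hx0 | hx0
    · rw [hx0, norm_zero]
      positivity
    · have hxpos : (0:ℝ) < ‖x‖ := norm_pos_iff.2 hx0
      have hunit : ‖(((‖x‖ : ℂ))⁻¹ • x : EuclideanSpace ℂ (Fin n))‖ = 1 := by
        rw [norm_smul, norm_inv, Complex.norm_real, norm_norm, inv_mul_cancel₀ hxpos.ne']
      have h1 : sMin (z • (1 : Matrix (Fin n) (Fin n) ℂ) - A) ≤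
          ‖φ (z • (1 : Matrix (Fin n) (Fin n) ℂ) - A) ((((‖x‖ : ℂ))⁻¹ : ℂ) • x)‖ :=
        sMin_le_norm_apply _ hunit
      have hφz : φ (z • (1 : Matrix (Fin n) (Fin n) ℂ) - A) = algebraMap ℂ _ z - a := by
        rw [map_sub, _root_.map_smul, _root_.map_one, Algebra.algebraMap_eq_smul_one]
      have h2 : ‖φ (z • (1 : Matrix (Fin n) (Fin n) ℂ) - A) ((((‖x‖ : ℂ))⁻¹ : ℂ) • x)‖
          = ‖x‖⁻¹ * ‖y‖ := by
        rw [hφz, _root_.map_smul, norm_smul, hcx, norm_inv, Complex.norm_real, norm_norm]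
      have hr_le : r ≤ ‖x‖⁻¹ * ‖y‖ := by
        have h0 : r ≤ sMin (z • (1 : Matrix (Fin n) (Fin n) ℂ) - A) := by
          rw [hzdef]; exact stabRadius_le A ω
        exact h0.trans (h1.trans_eq h2)
      rw [div_mul_eq_mul_div, le_div_iff₀ hr0, one_mul]
      calc ‖x‖ * r ≤ ‖x‖ * (‖x‖⁻¹ * ‖y‖) := by
            exact mul_le_mul_of_nonneg_left hr_le (norm_nonneg x)
        _ = ‖y‖ := by field_simp
  -- the resolvent far away is bounded by `1 / (‖z‖ - ‖a‖)`
  have hfar : ∀ z : ℂ, z ∈ resolventSet ℂ a → ‖a‖ < ‖z‖ →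
      ‖resolvent a z‖ ≤ 1 / (‖z‖ - ‖a‖) := by
    intro z hzres hza
    have hzu : IsUnit (algebraMap ℂ _ z - a) := hzres
    have hpos : (0:ℝ) < ‖z‖ - ‖a‖ := sub_pos.2 hza
    apply ContinuousLinearMap.opNorm_le_bound _ (by positivity)
    intro y
    set x := resolvent a z y with hxdef
    have hcx : (algebraMap ℂ _ z - a) x = y := by
      have h1 : (algebraMap ℂ _ z - a) * resolvent a z = 1 := by
        rw [resolvent]; exact Ring.mul_inverse_cancel _ hzu
      calc (algebraMap ℂ _ z - a) x = ((algebraMap ℂ _ z - a) * resolvent a z) y := rfl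
        _ = y := by rw [h1]; rfl
    have key : (‖z‖ - ‖a‖) * ‖x‖ ≤ ‖y‖ := by
      have : (algebraMap ℂ _ z - a) x = z • x - a x := by
        simp [Algebra.algebraMap_eq_smul_one, ContinuousLinearMap.sub_apply,
          ContinuousLinearMap.smul_apply, ContinuousLinearMap.one_apply]
      have h2 : ‖z • x‖ - ‖a x‖ ≤ ‖y‖ := by
        rw [← hcx, this]
        exact (norm_sub_norm_le _ _).trans (le_refl _)
      have h3 : ‖a x‖ ≤ ‖a‖ * ‖x‖ := a.le_opNorm x
      have h4 : ‖z • x‖ = ‖z‖ * ‖x‖ := norm_smul z x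
      nlinarith [norm_nonneg x]
    rw [div_mul_eq_mul_div, le_div_iff₀ hpos]
    linarith [key]
  -- maximum principle: the resolvent is bounded by `1/r` on the right half plane
  have hmax : ‖resolvent a μ‖ ≤ 1 / r := by
    set K : ℝ := ‖a‖ + r + ‖μ‖ + 1 with hKdef
    have hK1 : ‖μ‖ + 1 ≤ K := by
      have : 0 ≤ ‖a‖ + r := by positivity
      simp only [hKdef]; linarith
    have hKa : r ≤ K - ‖a‖ := by
      have : (0:ℝ) ≤ ‖μ‖ + 1 := by positivity
      simp only [hKdef]; linarith
    set U : Set ℂ := {z : ℂ | 0 < z.re ∧ ‖z‖ < K} with hUdef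
    have hUopen : IsOpen U := by
      apply IsOpen.inter
      · exact isOpen_lt continuous_const Complex.continuous_re
      · exact isOpen_lt continuous_norm continuous_const
    have hclosure : closure U ⊆ {z : ℂ | 0 ≤ z.re ∧ ‖z‖ ≤ K} := by
      have hcl : IsClosed {z : ℂ | 0 ≤ z.re ∧ ‖z‖ ≤ K} := by
        apply IsClosed.inter
        · exact isClosed_le continuous_const Complex.continuous_re
        · exact isClosed_le continuous_norm continuous_const
      apply closure_minimal _ hcl
      intro z hz
      exact ⟨hz.1.le, hz.2.le⟩
    have hUbdd : Bornology.IsBounded U := by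
      refine (Metric.isBounded_ball (x := (0:ℂ)) (r := K)).subset ?_
      intro z hz
      simpa [Metric.mem_ball, dist_eq_norm] using hz.2
    have hdiff : DiffContOnCl ℂ (resolvent a) U := by
      have hdAt : ∀ z ∈ closure U, DifferentiableAt ℂ (resolvent a) z := by
        intro z hz
        exact (spectrum.hasDerivAt_resolvent (hres z (hclosure hz).1)).differentiableAt
      constructor
      · exact fun z hz => (hdAt z (subset_closure hz)).differentiableWithinAt
      · exact fun z hz => (hdAt z hz).continuousAt.continuousWithinAt
    have hfront : ∀ z ∈ frontier U, ‖resolvent a z‖ ≤ 1 / r := by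
      intro z hz
      have hzc : z ∈ closure U := hz.1
      have hznU : z ∉ U := fun h => hz.2 (hUopen.interior_eq.symm ▸ h)
      have h1 := (hclosure hzc).1
      have h2 := (hclosure hzc).2
      rcases eq_or_lt_of_le h1 with hre0 | hrepos
      · -- on the imaginary axis
        have hz_eq : z = Complex.I * (z.im : ℂ) := by
          apply Complex.ext <;> simp [← hre0]
        rw [hz_eq]
        exact haxis z.im
      · -- then necessarily ‖z‖ = K
        have hK : ‖z‖ = K := by
          by_contra hne
          exact hznU ⟨hrepos, lt_of_le_of_ne h2 hne⟩
        have hlt : ‖a‖ < ‖z‖ := by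
          rw [hK, hKdef]
          have : (0:ℝ) < r + ‖μ‖ + 1 := by positivity
          linarith
        have := hfar z (hres z h1) hlt
        refine this.trans ?_
        apply one_div_le_one_div_of_le hr0
        rw [hK]; exact hKa
    have hμcl : μ ∈ closure U := by
      rw [mem_closure_iff]
      intro o ho hμo
      rcases Metric.isOpen_iff.1 ho μ hμo with ⟨ε, hε, hball⟩
      set δ := min ε 1 / 2 with hδ
      have hδpos : 0 < δ := by positivity
      have hδε : δ < ε := by
        rcases le_total ε 1 with h | h
        · simp only [hδ, min_eq_left h]; linarith
        · simp only [hδ, min_eq_right h]; linarith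
      have hδ1 : δ ≤ 1/2 := by
        simp only [hδ]
        have : min ε 1 ≤ 1 := min_le_right _ _
        linarith
      refine ⟨μ + (δ : ℂ), hball ?_, ?_, ?_⟩
      · rw [Metric.mem_ball, dist_eq_norm]
        simp only [add_sub_cancel_left]
        rw [Complex.norm_real, Real.norm_eq_abs, abs_of_pos hδpos]
        exact hδε
      · simp only [Complex.add_re, Complex.ofReal_re]
        linarith
      · have : ‖μ + (δ:ℂ)‖ ≤ ‖μ‖ + ‖(δ:ℂ)‖ := norm_add_le _ _
        have hn : ‖(δ:ℂ)‖ = δ := by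
          rw [Complex.norm_real, Real.norm_eq_abs, abs_of_pos hδpos]
        have : ‖μ + (δ:ℂ)‖ ≤ ‖μ‖ + δ := by rw [hn] at this; exact this
        have hlast : ‖μ‖ + δ < K := by
          have := hK1; linarith
        linarith
    exact Complex.norm_le_of_forall_mem_frontier_norm_le hUbdd hdiff hfront hμcl
  -- now extract an eigenvector of `A + B`
  have hnu : ¬IsUnit (algebraMap ℂ (Matrix (Fin n) (Fin n) ℂ) μ - (A + B)) :=
    spectrum.mem_iff.1 hμ
  have hdet : (algebraMap ℂ (Matrix (Fin n) (Fin n) ℂ) μ - (A + B)).det = 0 := by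
    by_contra h
    exact hnu ((Matrix.isUnit_iff_isUnit_det _).2 (isUnit_iff_ne_zero.2 h))
  obtain ⟨v, hv0, hv⟩ := (Matrix.exists_mulVec_eq_zero_iff).2 hdet
  set x : EuclideanSpace ℂ (Fin n) := (WithLp.equiv 2 (Fin n → ℂ)).symm v with hxdef
  have hx0 : x ≠ 0 := by
    simp only [hxdef]
    intro h
    apply hv0
    have := congrArg (WithLp.equiv 2 (Fin n → ℂ)) h
    simpa using this
  have hTx : φ (algebraMap ℂ (Matrix (Fin n) (Fin n) ℂ) μ - (A + B)) x = 0 := by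
    rw [hxdef, WithLp.equiv_symm_apply, Matrix.toEuclideanCLM_toLp, hv]
    simp
  have hkey : (algebraMap ℂ _ μ - a) x = b x := by
    have hexp : φ (algebraMap ℂ (Matrix (Fin n) (Fin n) ℂ) μ - (A + B)) =
        (algebraMap ℂ _ μ - a) - b := by
      rw [map_sub, map_add, Algebra.algebraMap_eq_smul_one, _root_.map_smul, _root_.map_one,
        Algebra.algebraMap_eq_smul_one]
      abel
    rw [hexp] at hTx
    rw [ContinuousLinearMap.sub_apply] at hTx
    exact sub_eq_zero.1 hTx
  have hu : IsUnit (algebraMap ℂ _ μ - a) := hres μ hre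
  have hxR : x = resolvent a μ (b x) := by
    have h1 : resolvent a μ * (algebraMap ℂ _ μ - a) = 1 := by
      rw [resolvent]; exact Ring.inverse_mul_cancel _ hu
    calc x = (resolvent a μ * (algebraMap ℂ _ μ - a)) x := by rw [h1]; rfl
      _ = resolvent a μ ((algebraMap ℂ _ μ - a) x) := rfl
      _ = resolvent a μ (b x) := by rw [hkey]
  have hxpos : (0:ℝ) < ‖x‖ := norm_pos_iff.2 hx0
  have hxle : ‖x‖ ≤ (1 / r) * (‖b‖ * ‖x‖) := by
    calc ‖x‖ = ‖resolvent a μ (b x)‖ := by rw [← hxR]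
      _ ≤ ‖resolvent a μ‖ * ‖b x‖ := (resolvent a μ).le_opNorm _
      _ ≤ (1 / r) * (‖b‖ * ‖x‖) := by
          exact mul_le_mul hmax (b.le_opNorm x) (norm_nonneg _) (one_div_nonneg.2 hr0.le)
  have h6 : ‖x‖ * r ≤ ‖b‖ * ‖x‖ := by
    have := mul_le_mul_of_nonneg_right hxle hr0.le
    calc ‖x‖ * r ≤ (1 / r) * (‖b‖ * ‖x‖) * r := this
      _ = ‖b‖ * ‖x‖ := by rw [div_mul_eq_mul_div, one_mul, div_mul_cancel₀ _ hr0.ne']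
  have h7 : ‖b‖ * ‖x‖ < r * ‖x‖ := mul_lt_mul_of_pos_right hbr hxpos
  linarith
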